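/- Suppose ν is a symmetric Lévy measure on ℝ^d whose restriction to B(0,r₀) \ {0} is absolutely continuous with density ν̄, and there are constants m₁, m₂ > 0 and a nonincreasing function f : (0,r₀] → (0,∞) satisfying condition (A2) such that m₁ f(|x|) ≤ ν̄(x) ≤ m₂ f(|x|) for 0 < |x| < r₀. If κ = inf_{s ∈ (0,r₀]} f(s) > 0, then there exist constants 0 < c ≤ C such that c Ψ(1/|x|) / |x|^d ≤ ν̄(x) ≤ C Ψ(1/|x|) / |x|^d for all 0 < |x| < r₀. -/

import Mathlib

open MeasureTheory Real Set Metric Filter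
open scoped ENNReal NNReal Topology

noncomputable section

variable {d : ℕ}


section Aux

lemma sin_half_sq (t : ℝ) : Real.sin (t/2) ^ 2 = 1/2 - Real.cos t / 2 := by
  have h1 : Real.cos (t/2) ^ 2 = 1/2 + Real.cos (2 * (t/2)) / 2 := Real.cos_sq (t/2)
  have h2 : Real.sin (t/2) ^ 2 + Real.cos (t/2) ^ 2 = 1 := Real.sin_sq_add_cos_sq (t/2)
  have : (2 : ℝ) * (t/2) = t := by ring
  rw [this] at h1
  linarith

lemma one_sub_cos_le_two (t : ℝ) : 1 - Real.cos t ≤ 2 := by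
  nlinarith [Real.neg_one_le_cos t]

lemma one_sub_cos_le_sq (t : ℝ) : 1 - Real.cos t ≤ t ^ 2 := by
  have h1 := sin_half_sq t
  have h2 := Real.sin_sq_le_sq (x := t/2)
  nlinarith

lemma one_sub_cos_ge (t : ℝ) (h : |t| ≤ 1) : t ^ 2 / 4 ≤ 1 - Real.cos t := by
  have key : ∀ s : ℝ, 0 ≤ s → s ≤ 1 → s ^ 2 / 4 ≤ 1 - Real.cos s := by
    intro s hs hs1
    rcases eq_or_lt_of_le hs with rfl | hs
    · simp
    have h2 : s/2 - (s/2)^3/4 < Real.sin (s/2) := by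
      have := Real.sin_gt_sub_cube (x := s/2) (by linarith)
      linarith [pow_pos (show (0:ℝ) < s/2 by linarith) 3]
    have h3 := sin_half_sq s
    have hs3 : s^3 ≤ s := by nlinarith [mul_nonneg (mul_nonneg hs.le (sub_nonneg.2 hs1)) (by linarith : (0:ℝ) ≤ 1 + s)]
    have h4 : (15/16 : ℝ) * (s/2) ≤ s/2 - (s/2)^3/4 := by nlinarith
    have h5 : (0:ℝ) ≤ (15/16) * (s/2) := by nlinarith
    nlinarith [sq_nonneg (Real.sin (s/2) - 15/16*(s/2))]
  rcases abs_le.1 h with ⟨h1, h2⟩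
  rcases le_or_gt 0 t with ht | ht
  · exact key t ht h2
  · have := key (-t) (by linarith) (by linarith)
    simpa using this


lemma sum_min_geom (γ₁ γ₂ : ℝ) (hγ₁ : 0 < γ₁) (hγ₂ : 0 < γ₂) (x₀ : ℝ) (hx₀ : 1 ≤ x₀) :
    ∀ N : ℕ, ∑ n ∈ Finset.range N, min ((x₀/2^n) ^ (-γ₁)) ((x₀/2^n) ^ γ₂) ≤
      (2:ℝ)^γ₁ * ((2:ℝ)^γ₁ - 1)⁻¹ + (1 - (2:ℝ)^(-γ₂))⁻¹ := by
  intro N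
  have hx₀pos : (0:ℝ) < x₀ := lt_of_lt_of_le one_pos hx₀
  have hxn : ∀ n : ℕ, (0:ℝ) < x₀/2^n := fun n => by positivity
  set m : ℕ := ⌈Real.logb 2 x₀⌉₊ with hm
  have hlogb_nonneg : 0 ≤ Real.logb 2 x₀ := Real.logb_nonneg one_lt_two hx₀
  have h2m_ge : x₀ ≤ (2:ℝ)^m := by
    have h1 : Real.logb 2 x₀ ≤ (m:ℝ) := Nat.le_ceil _
    calc x₀ = (2:ℝ) ^ Real.logb 2 x₀ := (Real.rpow_logb two_pos (by norm_num) hx₀pos).symm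
      _ ≤ (2:ℝ) ^ (m:ℝ) := Real.rpow_le_rpow_of_exponent_le one_le_two h1
      _ = (2:ℝ)^m := Real.rpow_natCast 2 m
  have h2m_le : (2:ℝ)^m ≤ 2 * x₀ := by
    have h1 : (m:ℝ) ≤ Real.logb 2 x₀ + 1 := by
      have := Nat.ceil_lt_add_one hlogb_nonneg
      linarith [this]
    calc (2:ℝ)^m = (2:ℝ) ^ (m:ℝ) := (Real.rpow_natCast 2 m).symm
      _ ≤ (2:ℝ) ^ (Real.logb 2 x₀ + 1) := Real.rpow_le_rpow_of_exponent_le one_le_two h1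
      _ = (2:ℝ) ^ Real.logb 2 x₀ * 2 := by
          rw [Real.rpow_add two_pos, Real.rpow_one]
      _ = 2 * x₀ := by rw [Real.rpow_logb two_pos (by norm_num) hx₀pos]; ring
  -- head and tail pieces
  have hbound : ∀ n ∈ Finset.range N,
      min ((x₀/2^n) ^ (-γ₁)) ((x₀/2^n) ^ γ₂) ≤
        (if n < m then (x₀/2^n) ^ (-γ₁) else 0) + (if m ≤ n then (x₀/2^n) ^ γ₂ else 0) := by
    intro n _
    rcases lt_or_ge n m with h | h
    · simp only [if_pos h, if_neg (not_le.2 h), add_zero]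
      exact min_le_left _ _
    · simp only [if_neg (not_lt.2 h), if_pos h, zero_add]
      exact min_le_right _ _
  refine le_trans (Finset.sum_le_sum hbound) ?_
  rw [Finset.sum_add_distrib]
  have head : ∑ n ∈ Finset.range N, (if n < m then (x₀/2^n) ^ (-γ₁) else 0) ≤
      (2:ℝ)^γ₁ * ((2:ℝ)^γ₁ - 1)⁻¹ := by
    have hp : (1:ℝ) < (2:ℝ)^γ₁ := Real.one_lt_rpow_iff_of_pos two_pos |>.2 (Or.inl ⟨one_lt_two, hγ₁⟩)
    have hterm : ∀ n : ℕ, (x₀/2^n) ^ (-γ₁) = x₀ ^ (-γ₁) * ((2:ℝ)^γ₁)^n := by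
      intro n
      rw [Real.div_rpow hx₀pos.le (by positivity)]
      rw [div_eq_mul_inv]
      congr 1
      rw [← Real.rpow_natCast (2:ℝ) n, ← Real.rpow_natCast ((2:ℝ)^γ₁) n,
        ← Real.rpow_neg_one, ← Real.rpow_mul two_pos.le, ← Real.rpow_mul two_pos.le,
        ← Real.rpow_mul two_pos.le]
      ring_nf
    calc ∑ n ∈ Finset.range N, (if n < m then (x₀/2^n) ^ (-γ₁) else 0)
        = ∑ n ∈ (Finset.range N).filter (fun n => n < m), (x₀/2^n) ^ (-γ₁) := by
          rw [Finset.sum_filter]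
      _ ≤ ∑ n ∈ Finset.range m, (x₀/2^n) ^ (-γ₁) := by
          apply Finset.sum_le_sum_of_subset_of_nonneg
          · intro n hn
            simp only [Finset.mem_filter, Finset.mem_range] at hn ⊢
            exact hn.2
          · intro n _ _
            positivity
      _ = x₀ ^ (-γ₁) * ∑ n ∈ Finset.range m, ((2:ℝ)^γ₁)^n := by
          rw [Finset.mul_sum]
          exact Finset.sum_congr rfl (fun n _ => hterm n)
      _ = x₀ ^ (-γ₁) * ((((2:ℝ)^γ₁)^m - 1) / ((2:ℝ)^γ₁ - 1)) := by
          rw [geom_sum_eq hp.ne']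
      _ ≤ x₀ ^ (-γ₁) * ((((2:ℝ)^γ₁)^m) / ((2:ℝ)^γ₁ - 1)) := by
          apply mul_le_mul_of_nonneg_left _ (by positivity)
          apply div_le_div_of_nonneg_right _ (by linarith)
          · linarith
      _ ≤ (2:ℝ)^γ₁ * ((2:ℝ)^γ₁ - 1)⁻¹ := by
          have h1 : ((2:ℝ)^γ₁)^m = ((2:ℝ)^m : ℝ) ^ γ₁ := by
            rw [← Real.rpow_natCast ((2:ℝ)^γ₁) m, ← Real.rpow_natCast (2:ℝ) m,
              ← Real.rpow_mul two_pos.le, ← Real.rpow_mul two_pos.le]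
            ring_nf
          have h2 : ((2:ℝ)^m : ℝ) ^ γ₁ ≤ (2*x₀) ^ γ₁ :=
            Real.rpow_le_rpow (by positivity) h2m_le hγ₁.le
          have h3 : (2*x₀) ^ γ₁ = 2^γ₁ * x₀^γ₁ := Real.mul_rpow two_pos.le hx₀pos.le
          have h4 : x₀ ^ (-γ₁) * x₀ ^ γ₁ = 1 := by
            rw [← Real.rpow_add hx₀pos]; simp
          calc x₀ ^ (-γ₁) * (((2:ℝ)^γ₁)^m / ((2:ℝ)^γ₁ - 1))
              ≤ x₀ ^ (-γ₁) * ((2^γ₁ * x₀^γ₁) / ((2:ℝ)^γ₁ - 1)) := by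
                apply mul_le_mul_of_nonneg_left _ (by positivity)
                apply div_le_div_of_nonneg_right _ (by linarith)
                rw [h1, ← h3]; exact h2
            _ = ((x₀ ^ (-γ₁) * x₀ ^ γ₁) * (2:ℝ)^γ₁) * ((2:ℝ)^γ₁ - 1)⁻¹ := by
                rw [div_eq_mul_inv]; ring
            _ = (2:ℝ)^γ₁ * ((2:ℝ)^γ₁ - 1)⁻¹ := by rw [h4, one_mul]
  have tail : ∑ n ∈ Finset.range N, (if m ≤ n then (x₀/2^n) ^ γ₂ else 0) ≤
      (1 - (2:ℝ)^(-γ₂))⁻¹ := by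
    have hq0 : (0:ℝ) < (2:ℝ)^(-γ₂) := Real.rpow_pos_of_pos two_pos _
    have hq1 : (2:ℝ)^(-γ₂) < 1 := by
      apply Real.rpow_lt_one_of_one_lt_of_neg one_lt_two (by linarith)
    have hxm : x₀ / 2^m ≤ 1 := by
      rw [div_le_one (by positivity)]
      exact h2m_ge
    have hterm : ∀ k : ℕ, (x₀/2^(m+k)) ^ γ₂ = (x₀ / 2^m) ^ γ₂ * ((2:ℝ)^(-γ₂))^k := by
      intro k
      have : x₀/2^(m+k) = (x₀/2^m) * (2^k)⁻¹ := by
        rw [pow_add]; field_simp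
      rw [this, Real.mul_rpow (by positivity) (by positivity)]
      congr 1
      rw [← Real.rpow_natCast (2:ℝ) k, ← Real.rpow_neg_one,
        ← Real.rpow_mul two_pos.le, ← Real.rpow_mul two_pos.le,
        ← Real.rpow_natCast ((2:ℝ)^(-γ₂)) k, ← Real.rpow_mul two_pos.le]
      ring_nf
    calc ∑ n ∈ Finset.range N, (if m ≤ n then (x₀/2^n) ^ γ₂ else 0)
        = ∑ n ∈ (Finset.range N).filter (fun n => m ≤ n), (x₀/2^n) ^ γ₂ := by
          rw [Finset.sum_filter]
      _ ≤ ∑ n ∈ Finset.Ico m (m + N), (x₀/2^n) ^ γ₂ := by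
          apply Finset.sum_le_sum_of_subset_of_nonneg
          · intro n hn
            simp only [Finset.mem_filter, Finset.mem_range, Finset.mem_Ico] at hn ⊢
            exact ⟨hn.2, by omega⟩
          · intro n _ _
            positivity
      _ = ∑ k ∈ Finset.range N, (x₀/2^(m+k)) ^ γ₂ := by
          rw [Finset.sum_Ico_eq_sum_range]
          simp
      _ = (x₀ / 2^m) ^ γ₂ * ∑ k ∈ Finset.range N, ((2:ℝ)^(-γ₂))^k := by
          rw [Finset.mul_sum]
          exact Finset.sum_congr rfl (fun k _ => hterm k)
      _ ≤ 1 * ((1 - (2:ℝ)^(-γ₂))⁻¹) := by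
          apply mul_le_mul
          · exact Real.rpow_le_one (by positivity) hxm hγ₂.le
          · rw [geom_sum_eq hq1.ne, ← one_div]
            have h1q : (0:ℝ) < 1 - (2:ℝ)^(-γ₂) := by linarith
            have heq : (((2:ℝ)^(-γ₂))^N - 1)/((2:ℝ)^(-γ₂) - 1)
                = (1 - ((2:ℝ)^(-γ₂))^N)/(1 - (2:ℝ)^(-γ₂)) := by
              rw [div_eq_div_iff (by linarith) (by linarith)]; ring
            rw [heq]
            have hN : (0:ℝ) ≤ ((2:ℝ)^(-γ₂))^N := by positivity
            gcongr
            linarith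
          · positivity
          · norm_num
      _ = (1 - (2:ℝ)^(-γ₂))⁻¹ := one_mul _
  linarith


lemma tsum_ofReal_le' (a : ℕ → ℝ) (ha : ∀ n, 0 ≤ a n) (S : ℝ)
    (h : ∀ N : ℕ, ∑ n ∈ Finset.range N, a n ≤ S) :
    ∑' n, ENNReal.ofReal (a n) ≤ ENNReal.ofReal S := by
  rw [ENNReal.tsum_eq_iSup_sum]
  apply iSup_le
  intro s
  obtain ⟨N, hN⟩ := s.exists_nat_subset_range
  calc ∑ n ∈ s, ENNReal.ofReal (a n) = ENNReal.ofReal (∑ n ∈ s, a n) :=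
        (ENNReal.ofReal_sum_of_nonneg (fun n _ => ha n)).symm
    _ ≤ ENNReal.ofReal (∑ n ∈ Finset.range N, a n) := by
        apply ENNReal.ofReal_le_ofReal
        exact Finset.sum_le_sum_of_subset_of_nonneg hN (fun n _ _ => ha n)
    _ ≤ ENNReal.ofReal S := ENNReal.ofReal_le_ofReal (h N)

lemma one_sub_cos_le_min (t : ℝ) (hsq : 1 - Real.cos t ≤ t ^ 2) : 1 - Real.cos t ≤ min 2 (t^2) := by
  apply le_min _ hsq
  nlinarith [Real.neg_one_le_cos t]

-- covering lemma
lemma shell_cover {r₀ t : ℝ} (hr₀ : 0 < r₀) (ht : 0 < t) (htr : t < r₀) :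
    ∃ n : ℕ, r₀/2^(n+1) ≤ t ∧ t < r₀/2^n := by
  have hex : ∃ n : ℕ, r₀/2^(n+1) ≤ t := by
    obtain ⟨n, hn⟩ := exists_pow_lt_of_lt_one (div_pos ht hr₀) (by norm_num : ((2:ℝ)⁻¹) < 1)
    refine ⟨n, ?_⟩
    have h1 : ((2:ℝ)⁻¹)^n = 1/2^n := by
      rw [inv_pow]; exact (one_div _).symm
    rw [h1, div_lt_div_iff₀ (by positivity) hr₀] at hn
    rw [div_le_iff₀ (by positivity)]
    have : (2:ℝ)^(n+1) ≥ 2^n := by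
      apply pow_le_pow_right₀ one_le_two (by omega)
    nlinarith
  classical
  set n₀ := Nat.find hex with hn₀
  have h1 : r₀/2^(n₀+1) ≤ t := Nat.find_spec hex
  refine ⟨n₀, h1, ?_⟩
  match hn : n₀ with
  | 0 => simpa using htr
  | Nat.succ k =>
    have h2 : ¬ (r₀/2^(k+1) ≤ t) := Nat.find_min hex (by omega)
    push_neg at h2
    exact h2


lemma min_prod_bound (c β₁ β₂ : ℝ) (h12 : β₁ ≤ β₂) (hcmp : β₂ - β₁ ≤ 2) (x : ℝ) (hx : 0 < x) :
    min 2 (x^2) * ((2/x)^β₂ + (2/x)^β₁) * x^c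
      ≤ (2:ℝ)^(β₂+2) * min (x^(c-β₁)) (x^(c+2-β₂)) := by
  have hrw : ∀ β : ℝ, (2/x)^β = 2^β * (x^β)⁻¹ := by
    intro β
    rw [div_eq_mul_inv, Real.mul_rpow two_pos.le (by positivity), Real.inv_rpow hx.le]
  have h2e : (2:ℝ)^(β₂+2) = 4 * (2:ℝ)^β₂ := by
    rw [Real.rpow_add two_pos, show ((2:ℝ)^(2:ℝ)) = 4 by
      rw [show (2:ℝ) = ((2:ℕ):ℝ) by norm_num, Real.rpow_natCast]; norm_num]
    ring
  have hxb1 : (0:ℝ) < x^β₁ := Real.rpow_pos_of_pos hx _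
  have hxb2 : (0:ℝ) < x^β₂ := Real.rpow_pos_of_pos hx _
  have hxc : (0:ℝ) < x^c := Real.rpow_pos_of_pos hx _
  have h2b : (2:ℝ)^β₁ ≤ (2:ℝ)^β₂ := Real.rpow_le_rpow_of_exponent_le one_le_two h12
  have h2bpos : (0:ℝ) < (2:ℝ)^β₂ := Real.rpow_pos_of_pos two_pos _
  rcases le_total 1 x with hx1 | hx1
  · have hmin : min (x^(c-β₁)) (x^(c+2-β₂)) = x^(c-β₁) :=
      min_eq_left (Real.rpow_le_rpow_of_exponent_le hx1 (by linarith))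
    rw [hmin]
    have hmono : x^β₁ ≤ x^β₂ := Real.rpow_le_rpow_of_exponent_le hx1 h12
    have hsum : (2/x)^β₂ + (2/x)^β₁ ≤ 2 * ((2:ℝ)^β₂ * (x^β₁)⁻¹) := by
      rw [hrw, hrw]
      have e1 : (2:ℝ)^β₂ * (x^β₂)⁻¹ ≤ (2:ℝ)^β₂ * (x^β₁)⁻¹ := by
        gcongr
      have e2 : (2:ℝ)^β₁ * (x^β₁)⁻¹ ≤ (2:ℝ)^β₂ * (x^β₁)⁻¹ := by
        gcongr
      linarith
    calc min 2 (x^2) * ((2/x)^β₂ + (2/x)^β₁) * x^c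
        ≤ 2 * (2 * ((2:ℝ)^β₂ * (x^β₁)⁻¹)) * x^c := by
          have hminle : min 2 (x^2) ≤ 2 := min_le_left _ _
          have hsumnn : (0:ℝ) ≤ (2/x)^β₂ + (2/x)^β₁ := by positivity
          exact mul_le_mul_of_nonneg_right
            (mul_le_mul hminle hsum hsumnn (by norm_num)) hxc.le
      _ = (2:ℝ)^(β₂+2) * x^(c-β₁) := by
          rw [h2e, Real.rpow_sub hx, div_eq_mul_inv]; ring
  · have hmin : min (x^(c-β₁)) (x^(c+2-β₂)) = x^(c+2-β₂) :=
      min_eq_right (Real.rpow_le_rpow_of_exponent_ge hx hx1 (by linarith))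
    rw [hmin]
    have hmono : x^β₂ ≤ x^β₁ := Real.rpow_le_rpow_of_exponent_ge hx hx1 h12
    have hsum : (2/x)^β₂ + (2/x)^β₁ ≤ 2 * ((2:ℝ)^β₂ * (x^β₂)⁻¹) := by
      rw [hrw, hrw]
      have e1 : (2:ℝ)^β₁ * (x^β₁)⁻¹ ≤ (2:ℝ)^β₂ * (x^β₂)⁻¹ := by
        gcongr
      linarith
    calc min 2 (x^2) * ((2/x)^β₂ + (2/x)^β₁) * x^c
        ≤ x^2 * (2 * ((2:ℝ)^β₂ * (x^β₂)⁻¹)) * x^c := by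
          have hminle : min 2 (x^2) ≤ x^2 := min_le_right _ _
          have hsumnn : (0:ℝ) ≤ (2/x)^β₂ + (2/x)^β₁ := by positivity
          exact mul_le_mul_of_nonneg_right
            (mul_le_mul hminle hsum hsumnn (by positivity)) hxc.le
      _ = 2 * ((2:ℝ)^β₂ * (x^2 * x^c / x^β₂)) := by
          rw [div_eq_mul_inv]; ring
      _ ≤ 4 * ((2:ℝ)^β₂ * (x^2 * x^c / x^β₂)) := by
          have hq : (0:ℝ) < (2:ℝ)^β₂ * (x^2 * x^c / x^β₂) := by positivity
          linarith
      _ = (2:ℝ)^(β₂+2) * (x^2 * x^c / x^β₂) := by rw [h2e]; ring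
      _ = (2:ℝ)^(β₂+2) * x^(c+2-β₂) := by
          have hx2 : x^(2:ℝ) = x^2 := by
            rw [← Real.rpow_natCast x 2]; norm_num
          have hkey : x^(c+2-β₂) = x^2 * x^c / x^β₂ := by
            rw [Real.rpow_sub hx, Real.rpow_add hx, hx2]; ring
          rw [hkey]

end Aux

noncomputable section AuxM
open scoped Pointwise
variable {d : ℕ}

lemma psi_lower_aux
    (ν : Measure (EuclideanSpace ℝ (Fin d)))
    (r₀ : ℝ) (hr₀ : 0 < r₀)
    (νb : EuclideanSpace ℝ (Fin d) → ℝ)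
    (hac : ∀ A : Set (EuclideanSpace ℝ (Fin d)), MeasurableSet A →
      A ⊆ Metric.ball (0 : EuclideanSpace ℝ (Fin d)) r₀ →
      ν A = ∫⁻ x in A, ENNReal.ofReal (νb x))
    (f : ℝ → ℝ)
    (hf_pos : ∀ s : ℝ, 0 < s → s ≤ r₀ → 0 < f s)
    (hf_anti : ∀ s u : ℝ, 0 < s → s ≤ u → u ≤ r₀ → f u ≤ f s)
    (m₁ : ℝ) (hm₁ : 0 < m₁)
    (hlow : ∀ x : EuclideanSpace ℝ (Fin d), 0 < ‖x‖ → ‖x‖ < r₀ → m₁ * f ‖x‖ ≤ νb x)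
    (e : EuclideanSpace ℝ (Fin d)) (he : ‖e‖ = 1)
    (hone_sub_cos_ge : ∀ t : ℝ, |t| ≤ 1 → t ^ 2 / 4 ≤ 1 - Real.cos t) :
    ∃ cL : ℝ, 0 < cL ∧ ∀ r : ℝ, 0 < r → r < r₀ →
      ENNReal.ofReal (cL * (f r * r ^ d)) ≤
        ∫⁻ y, ENNReal.ofReal (1 - Real.cos ((inner ℝ (r⁻¹ • e) y))) ∂ν := by
  classical
  set S₁ : Set (EuclideanSpace ℝ (Fin d)) :=
    {y | ‖y‖ < 1 ∧ 1/2 < |(inner ℝ e y)|} with hS₁def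
  have hS₁open : IsOpen S₁ :=
    (isOpen_lt continuous_norm continuous_const).and
      (isOpen_lt continuous_const ((Continuous.inner continuous_const continuous_id).abs))
  have hmem : (3/4 : ℝ) • e ∈ S₁ := by
    constructor
    · rw [norm_smul, he]
      simp only [Real.norm_eq_abs]
      rw [abs_of_nonneg (by norm_num : (0:ℝ) ≤ 3/4)]
      norm_num
    · rw [real_inner_smul_right, real_inner_self_eq_norm_sq, he]
      rw [abs_of_nonneg] <;> norm_num
  have hvol_pos : 0 < volume S₁ := hS₁open.measure_pos volume ⟨_, hmem⟩
  have hvol_lt : volume S₁ < ⊤ :=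
    lt_of_le_of_lt (measure_mono (fun y hy => mem_ball_zero_iff.2 hy.1)) measure_ball_lt_top
  have hvolR : 0 < (volume S₁).toReal := ENNReal.toReal_pos hvol_pos.ne' hvol_lt.ne
  refine ⟨m₁ * (volume S₁).toReal / 16, by positivity, ?_⟩
  intro r hr hrr₀
  set Sr : Set (EuclideanSpace ℝ (Fin d)) := r • S₁ with hSrdef
  have hSr_open : IsOpen Sr := hS₁open.smul₀ hr.ne'
  have hSr_meas : MeasurableSet Sr := hSr_open.measurableSet
  have hSr_prop : ∀ y ∈ Sr, ‖y‖ < r ∧ r/2 < |(inner ℝ e y)| := by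
    rintro y ⟨z, hz, rfl⟩
    constructor
    · rw [norm_smul, Real.norm_eq_abs, abs_of_nonneg hr.le]
      calc r * ‖z‖ < r * 1 := by exact (mul_lt_mul_iff_right₀ hr).2 hz.1
        _ = r := mul_one r
    · rw [real_inner_smul_right, abs_mul, abs_of_nonneg hr.le]
      have := hz.2
      calc r / 2 = r * (1/2) := by ring
        _ < r * |(inner ℝ e z)| := by exact (mul_lt_mul_iff_right₀ hr).2 this
  have hSr_sub : Sr ⊆ Metric.ball (0 : EuclideanSpace ℝ (Fin d)) r₀ := fun y hy =>
    mem_ball_zero_iff.2 (lt_trans (hSr_prop y hy).1 hrr₀)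
  have hvolSr : volume Sr = ENNReal.ofReal (r ^ d) * volume S₁ := by
    rw [hSrdef, Measure.addHaar_smul_of_nonneg volume hr.le, finrank_euclideanSpace_fin]
  -- pointwise lower bound on Sr
  have key : ∀ y ∈ Sr, ENNReal.ofReal (1/16 : ℝ) ≤
      ENNReal.ofReal (1 - Real.cos ((inner ℝ (r⁻¹ • e) y))) := by
    intro y hy
    obtain ⟨hy1, hy2⟩ := hSr_prop y hy
    have habs : |(inner ℝ e y)| ≤ ‖y‖ := by
      calc |(inner ℝ e y)| ≤ ‖e‖ * ‖y‖ := abs_real_inner_le_norm e y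
        _ = ‖y‖ := by rw [he, one_mul]
    set t : ℝ := (inner ℝ (r⁻¹ • e) y) with htdef
    have ht : t = r⁻¹ * (inner ℝ e y) := by
      rw [htdef, real_inner_smul_left]
    have habst : |t| = r⁻¹ * |(inner ℝ e y)| := by
      rw [ht, abs_mul, abs_of_nonneg (by positivity : (0:ℝ) ≤ r⁻¹)]
    have h1 : |t| ≤ 1 := by
      rw [habst]
      calc r⁻¹ * |(inner ℝ e y)| ≤ r⁻¹ * ‖y‖ := by
            exact mul_le_mul_of_nonneg_left habs (by positivity)
        _ ≤ r⁻¹ * r := mul_le_mul_of_nonneg_left hy1.le (by positivity)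
        _ = 1 := inv_mul_cancel₀ hr.ne'
    have h2 : 1/2 < |t| := by
      rw [habst]
      calc (1:ℝ)/2 = r⁻¹ * (r/2) := by field_simp
        _ < r⁻¹ * |(inner ℝ e y)| := by
            exact (mul_lt_mul_iff_right₀ (by positivity)).2 hy2
    apply ENNReal.ofReal_le_ofReal
    have h3 := hone_sub_cos_ge t h1
    have h4 : (1:ℝ)/4 ≤ t^2 := by
      have : (1/2:ℝ)^2 ≤ |t|^2 := by
        apply sq_le_sq' <;> [linarith [abs_nonneg t]; linarith]
      rw [sq_abs] at this; linarith
    linarith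
  -- chain
  have step1 : ∫⁻ y in Sr, ENNReal.ofReal (1/16 : ℝ) ∂ν ≤
      ∫⁻ y in Sr, ENNReal.ofReal (1 - Real.cos ((inner ℝ (r⁻¹ • e) y))) ∂ν :=
    setLIntegral_mono' hSr_meas key
  have step2 : ν Sr = ∫⁻ x in Sr, ENNReal.ofReal (νb x) := hac Sr hSr_meas hSr_sub
  have step3 : ENNReal.ofReal (m₁ * f r) * volume Sr ≤ ν Sr := by
    rw [step2, ← setLIntegral_const Sr (ENNReal.ofReal (m₁ * f r))]
    apply setLIntegral_mono' hSr_meas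
    intro y hy
    obtain ⟨hy1, hy2⟩ := hSr_prop y hy
    have habs : |(inner ℝ e y)| ≤ ‖y‖ := by
      calc |(inner ℝ e y)| ≤ ‖e‖ * ‖y‖ := abs_real_inner_le_norm e y
        _ = ‖y‖ := by rw [he, one_mul]
    have hy0 : 0 < ‖y‖ := lt_of_lt_of_le (lt_trans (by positivity) hy2) habs
    apply ENNReal.ofReal_le_ofReal
    calc m₁ * f r ≤ m₁ * f ‖y‖ := by
          exact mul_le_mul_of_nonneg_left (hf_anti ‖y‖ r hy0 hy1.le hrr₀.le) hm₁.le
      _ ≤ νb y := hlow y hy0 (lt_trans hy1 hrr₀)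
  calc ENNReal.ofReal (m₁ * (volume S₁).toReal / 16 * (f r * r ^ d))
      = ENNReal.ofReal ((1/16) * ((m₁ * f r) * (r ^ d * (volume S₁).toReal))) := by
        ring_nf
    _ = ENNReal.ofReal (1/16 : ℝ) * (ENNReal.ofReal (m₁ * f r) *
          (ENNReal.ofReal (r ^ d) * ENNReal.ofReal ((volume S₁).toReal))) := by
        have hfr : 0 < f r := hf_pos r hr hrr₀.le
        rw [ENNReal.ofReal_mul (by norm_num : (0:ℝ) ≤ 1/16),
          ENNReal.ofReal_mul (by positivity : (0:ℝ) ≤ m₁ * f r),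
          ENNReal.ofReal_mul (by positivity : (0:ℝ) ≤ (r:ℝ) ^ d)]
    _ = ENNReal.ofReal (1/16 : ℝ) * (ENNReal.ofReal (m₁ * f r) * volume Sr) := by
        rw [ENNReal.ofReal_toReal hvol_lt.ne, hvolSr]
    _ ≤ ENNReal.ofReal (1/16 : ℝ) * ν Sr := by
        exact mul_le_mul_right (by rw [mul_comm] at step3 ⊢; exact step3) _
    _ = ∫⁻ y in Sr, ENNReal.ofReal (1/16 : ℝ) ∂ν := (setLIntegral_const Sr _).symm
    _ ≤ ∫⁻ y in Sr, ENNReal.ofReal (1 - Real.cos ((inner ℝ (r⁻¹ • e) y))) ∂ν := step1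
    _ ≤ ∫⁻ y, ENNReal.ofReal (1 - Real.cos ((inner ℝ (r⁻¹ • e) y))) ∂ν :=
        setLIntegral_le_lintegral Sr _






set_option maxHeartbeats 2000000 in
lemma psi_upper_aux (hd : 1 ≤ d)
    (ν : Measure (EuclideanSpace ℝ (Fin d)))
    (hL : (∫⁻ y, ENNReal.ofReal (min 1 (‖y‖ ^ 2)) ∂ν) < ⊤)
    (r₀ : ℝ) (hr₀ : 0 < r₀)
    (νb : EuclideanSpace ℝ (Fin d) → ℝ)
    (hac : ∀ A : Set (EuclideanSpace ℝ (Fin d)), MeasurableSet A →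
      A ⊆ Metric.ball (0 : EuclideanSpace ℝ (Fin d)) r₀ →
      ν A = ∫⁻ x in A, ENNReal.ofReal (νb x))
    (f : ℝ → ℝ)
    (hf_pos : ∀ s : ℝ, 0 < s → s ≤ r₀ → 0 < f s)
    (hf_anti : ∀ s u : ℝ, 0 < s → s ≤ u → u ≤ r₀ → f u ≤ f s)
    (M₁ M₂ β₁ β₂ : ℝ) (hM₁ : 0 < M₁) (hM₂ : 0 < M₂)
    (hβ₁ : (d:ℝ) < β₁) (hβ12 : β₁ ≤ β₂) (hβ₂ : β₂ < (d:ℝ) + 2)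
    (hA2 : ∀ r R : ℝ, 0 < r → r ≤ R → R ≤ r₀ →
      M₁ * (R / r) ^ β₁ ≤ f r / f R ∧ f r / f R ≤ M₂ * (R / r) ^ β₂)
    (m₂ : ℝ) (hm₂ : 0 < m₂)
    (hupp : ∀ x : EuclideanSpace ℝ (Fin d), 0 < ‖x‖ → ‖x‖ < r₀ → νb x ≤ m₂ * f ‖x‖) :
    ∃ CU : ℝ, 0 < CU ∧ ∀ r : ℝ, 0 < r → r < r₀ →
      (∫⁻ y, ENNReal.ofReal (min 2 (‖y‖^2 / r^2)) ∂ν) ≤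
        ENNReal.ofReal (CU * (f r * r ^ d)) := by
  classical
  set V₁ : ℝ≥0∞ := volume (Metric.ball (0 : EuclideanSpace ℝ (Fin d)) 1) with hV₁
  have hV₁top : V₁ < ⊤ := measure_ball_lt_top
  set L : ℝ≥0∞ := ∫⁻ y, ENNReal.ofReal (min 1 (‖y‖ ^ 2)) ∂ν with hLdef
  set Cf : ℝ := max M₂ M₁⁻¹ with hCf
  have hCfpos : 0 < Cf := lt_of_lt_of_le hM₂ (le_max_left _ _)
  set γ₁ : ℝ := β₁ - d with hγ₁def
  set γ₂ : ℝ := (d:ℝ) + 2 - β₂ with hγ₂def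
  have hγ₁ : 0 < γ₁ := by simp [hγ₁def]; linarith
  have hγ₂ : 0 < γ₂ := by simp [hγ₂def]; linarith
  set Sγ : ℝ := (2:ℝ)^γ₁ * ((2:ℝ)^γ₁ - 1)⁻¹ + (1 - (2:ℝ)^(-γ₂))⁻¹ with hSγ
  have h2γ₁ : (1:ℝ) < (2:ℝ)^γ₁ :=
    Real.one_lt_rpow_iff_of_pos two_pos |>.2 (Or.inl ⟨one_lt_two, hγ₁⟩)
  have h2γ₂ : (2:ℝ)^(-γ₂) < 1 := Real.rpow_lt_one_of_one_lt_of_neg one_lt_two (by linarith)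
  have hSγpos : 0 < Sγ := by
    apply add_pos
    · exact mul_pos (by positivity) (inv_pos.2 (by linarith))
    · exact inv_pos.2 (by linarith)
  set D : ℝ := m₂ * Cf * (2:ℝ)^(β₂+2) * V₁.toReal with hD
  have hDnn : 0 ≤ D := by positivity
  set cK : ℝ := 2 / min 1 (r₀^2) with hcK
  have hcKpos : 0 < cK := by
    apply div_pos two_pos
    exact lt_min one_pos (by positivity)
  set Kc : ℝ := (ENNReal.ofReal cK * L).toReal with hKc
  have hKcnn : 0 ≤ Kc := ENNReal.toReal_nonneg
  set δ : ℝ := M₁ * f r₀ * r₀^d with hδ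
  have hδpos : 0 < δ := by
    have := hf_pos r₀ hr₀ le_rfl
    positivity
  refine ⟨D * Sγ + Kc/δ + 1, by positivity, ?_⟩
  intro r hr hrr₀
  have hfr : 0 < f r := hf_pos r hr hrr₀.le
  have hrd : (0:ℝ) < r ^ d := by positivity
  -- δ ≤ f r * r^d
  have hδle : δ ≤ f r * r^d := by
    obtain ⟨h1, _⟩ := hA2 r r₀ hr hrr₀.le le_rfl
    have hfr₀ : 0 < f r₀ := hf_pos r₀ hr₀ le_rfl
    have hx₀1 : 1 ≤ r₀/r := (one_le_div hr).2 hrr₀.le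
    have h2 : (r₀/r)^(d:ℝ) ≤ (r₀/r)^β₁ :=
      Real.rpow_le_rpow_of_exponent_le hx₀1 hβ₁.le
    have h3 : (r₀/r)^(d:ℝ) = r₀^d / r^d := by
      rw [Real.rpow_natCast, div_pow]
    have h4 : M₁ * (r₀^d / r^d) ≤ f r / f r₀ := by
      calc M₁ * (r₀^d / r^d) = M₁ * (r₀/r)^(d:ℝ) := by rw [h3]
        _ ≤ M₁ * (r₀/r)^β₁ := by
            exact mul_le_mul_of_nonneg_left h2 hM₁.le
        _ ≤ f r / f r₀ := h1
    have h5 : M₁ * (r₀^d / r^d) * f r₀ ≤ f r := by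
      exact (le_div_iff₀ hfr₀).1 h4
    calc δ = M₁ * (r₀^d / r^d) * f r₀ * r^d := by
          rw [hδ]; field_simp
      _ ≤ f r * r^d := by
          exact mul_le_mul_of_nonneg_right h5 hrd.le
  -- nontriviality
  haveI hne : Nonempty (Fin d) := ⟨⟨0, hd⟩⟩
  haveI hnt : Nontrivial (EuclideanSpace ℝ (Fin d)) := by infer_instance
  -- the comparison function
  have hfcomp : ∀ a : ℝ, 0 < a → a ≤ r₀ →
      f a ≤ Cf * f r * ((r/a)^β₂ + (r/a)^β₁) := by
    intro a ha har₀
    have hfa : 0 < f a := hf_pos a ha har₀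
    have hsumnn1 : (0:ℝ) ≤ (r/a)^β₂ := Real.rpow_nonneg (by positivity) _
    have hsumnn2 : (0:ℝ) ≤ (r/a)^β₁ := Real.rpow_nonneg (by positivity) _
    rcases le_total a r with hle | hle
    · obtain ⟨_, h2⟩ := hA2 a r ha hle hrr₀.le
      have h3 : f a ≤ M₂ * (r/a)^β₂ * f r := (div_le_iff₀ hfr).1 h2
      calc f a ≤ M₂ * (r/a)^β₂ * f r := h3
        _ ≤ Cf * f r * (r/a)^β₂ := by
            have hM : M₂ ≤ Cf := le_max_left _ _
            nlinarith [mul_nonneg (mul_nonneg (sub_nonneg.2 hM) hfr.le) hsumnn1]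
        _ ≤ Cf * f r * ((r/a)^β₂ + (r/a)^β₁) := by
            nlinarith [mul_nonneg (mul_nonneg hCfpos.le hfr.le) hsumnn2]
    · obtain ⟨h1, _⟩ := hA2 r a hr hle har₀
      have hb1pos : (0:ℝ) < (a/r)^β₁ := Real.rpow_pos_of_pos (by positivity) _
      have h3 : M₁ * (a/r)^β₁ * f a ≤ f r := (le_div_iff₀ hfa).1 h1
      have hinv : ((a/r)^β₁)⁻¹ = (r/a)^β₁ := by
        rw [← Real.inv_rpow (by positivity : (0:ℝ) ≤ a/r), inv_div]
      have h4 : f a ≤ M₁⁻¹ * (r/a)^β₁ * f r := by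
        calc f a = (M₁ * (a/r)^β₁)⁻¹ * (M₁ * (a/r)^β₁ * f a) := by
              field_simp
          _ ≤ (M₁ * (a/r)^β₁)⁻¹ * f r := mul_le_mul_of_nonneg_left h3 (by positivity)
          _ = M₁⁻¹ * ((a/r)^β₁)⁻¹ * f r := by rw [mul_inv]
          _ = M₁⁻¹ * (r/a)^β₁ * f r := by rw [hinv]
      calc f a ≤ M₁⁻¹ * (r/a)^β₁ * f r := h4
        _ ≤ Cf * f r * (r/a)^β₁ := by
            have hM : M₁⁻¹ ≤ Cf := le_max_right _ _
            nlinarith [mul_nonneg (mul_nonneg (sub_nonneg.2 hM) hfr.le) hsumnn2]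
        _ ≤ Cf * f r * ((r/a)^β₂ + (r/a)^β₁) := by
            nlinarith [mul_nonneg (mul_nonneg hCfpos.le hfr.le) hsumnn1]
  -- sets
  set B : Set (EuclideanSpace ℝ (Fin d)) := {y | 0 < ‖y‖ ∧ ‖y‖ < r₀} with hBdef
  have hB : MeasurableSet B :=
    (measurableSet_lt measurable_const measurable_norm).inter
      (measurableSet_lt measurable_norm measurable_const)
  set ρ : ℕ → ℝ := fun n => r₀ / 2^n with hρ
  have hρpos : ∀ n, 0 < ρ n := fun n => by rw [hρ]; positivity
  have hρler₀ : ∀ n, ρ n ≤ r₀ := fun n => by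
    rw [hρ]
    exact div_le_self hr₀.le (one_le_pow₀ one_le_two)
  have hρsucc : ∀ n, ρ (n+1) = ρ n / 2 := fun n => by
    rw [hρ]; simp only []; rw [pow_succ, ← div_div]
  set Shell : ℕ → Set (EuclideanSpace ℝ (Fin d)) :=
    fun n => {y | ρ (n+1) ≤ ‖y‖ ∧ ‖y‖ < ρ n} with hShell
  have hShell_meas : ∀ n, MeasurableSet (Shell n) := fun n =>
    (measurableSet_le measurable_const measurable_norm).inter
      (measurableSet_lt measurable_norm measurable_const)
  have hShell_sub : ∀ n, Shell n ⊆ Metric.ball (0 : EuclideanSpace ℝ (Fin d)) r₀ :=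
    fun n y hy => mem_ball_zero_iff.2 (lt_of_lt_of_le hy.2 (hρler₀ n))
  -- outside bound
  have hWout : ∀ y ∈ Bᶜ, ENNReal.ofReal (min 2 (‖y‖^2 / r^2)) ≤
      ENNReal.ofReal cK * ENNReal.ofReal (min 1 (‖y‖^2)) := by
    intro y hy
    simp only [hBdef, mem_compl_iff, mem_setOf_eq, not_and, not_lt] at hy
    rcases le_or_gt r₀ ‖y‖ with h | h
    · rw [← ENNReal.ofReal_mul hcKpos.le]
      apply ENNReal.ofReal_le_ofReal
      have h2 : min 1 (r₀^2) ≤ min 1 (‖y‖^2) := by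
        apply min_le_min le_rfl
        nlinarith
      have h3 : 0 < min 1 (r₀^2) := lt_min one_pos (by positivity)
      calc min 2 (‖y‖^2/r^2) ≤ 2 := min_le_left _ _
        _ = cK * min 1 (r₀^2) := by rw [hcK]; field_simp
        _ ≤ cK * min 1 (‖y‖^2) := mul_le_mul_of_nonneg_left h2 hcKpos.le
    · have h0 : ‖y‖ = 0 := by
        by_contra hc
        have : 0 < ‖y‖ := lt_of_le_of_ne (norm_nonneg y) (Ne.symm hc)
        exact absurd h (not_lt.2 (hy this))
      rw [h0]
      simp
  have hout : ∫⁻ y in Bᶜ, ENNReal.ofReal (min 2 (‖y‖^2 / r^2)) ∂ν ≤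
      ENNReal.ofReal cK * L := by
    calc ∫⁻ y in Bᶜ, ENNReal.ofReal (min 2 (‖y‖^2 / r^2)) ∂ν
        ≤ ∫⁻ y in Bᶜ, ENNReal.ofReal cK * ENNReal.ofReal (min 1 (‖y‖^2)) ∂ν :=
          setLIntegral_mono' hB.compl hWout
      _ ≤ ∫⁻ y, ENNReal.ofReal cK * ENNReal.ofReal (min 1 (‖y‖^2)) ∂ν :=
          setLIntegral_le_lintegral _ _
      _ = ENNReal.ofReal cK * L := lintegral_const_mul' _ _ ENNReal.ofReal_ne_top
  have houtR : ENNReal.ofReal cK * L ≤ ENNReal.ofReal (Kc/δ * (f r * r^d)) := by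
    have hfin : ENNReal.ofReal cK * L ≠ ⊤ := ENNReal.mul_ne_top ENNReal.ofReal_ne_top hL.ne
    rw [← ENNReal.ofReal_toReal hfin, ← hKc]
    apply ENNReal.ofReal_le_ofReal
    calc Kc = Kc/δ * δ := by field_simp
      _ ≤ Kc/δ * (f r * r^d) := mul_le_mul_of_nonneg_left hδle (by positivity)
  -- cover
  have hcov : B ⊆ ⋃ n, Shell n := by
    intro y hy
    obtain ⟨n, h1, h2⟩ := shell_cover hr₀ hy.1 hy.2
    exact mem_iUnion.2 ⟨n, h1, h2⟩
  -- per-shell term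
  set a : ℕ → ℝ := fun n =>
    min 2 ((ρ n)^2 / r^2) * (m₂ * f (ρ (n+1))) * ((ρ n)^d * V₁.toReal) with ha
  have hann : ∀ n, 0 ≤ a n := by
    intro n
    rw [ha]
    have h1 : (0:ℝ) ≤ min 2 ((ρ n)^2 / r^2) := le_min (by norm_num) (by positivity)
    have h2 : 0 < f (ρ (n+1)) := hf_pos _ (hρpos _) (hρler₀ _)
    positivity
  have hterm : ∀ n, ∫⁻ y in Shell n, ENNReal.ofReal (min 2 (‖y‖^2 / r^2)) ∂ν ≤
      ENNReal.ofReal (a n) := by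
    intro n
    have hminnn : (0:ℝ) ≤ min 2 ((ρ n)^2 / r^2) := le_min (by norm_num) (by positivity)
    have hfρ : 0 < f (ρ (n+1)) := hf_pos _ (hρpos _) (hρler₀ _)
    have s1 : ∫⁻ y in Shell n, ENNReal.ofReal (min 2 (‖y‖^2 / r^2)) ∂ν ≤
        ENNReal.ofReal (min 2 ((ρ n)^2 / r^2)) * ν (Shell n) := by
      rw [← setLIntegral_const (Shell n)]
      apply setLIntegral_mono' (hShell_meas n)
      intro y hy
      apply ENNReal.ofReal_le_ofReal
      apply min_le_min le_rfl
      have h1 : ‖y‖^2 ≤ (ρ n)^2 := by nlinarith [hy.2, norm_nonneg y, (hρpos n).le]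
      gcongr
    have s2 : ν (Shell n) ≤ ENNReal.ofReal (m₂ * f (ρ (n+1))) *
        (ENNReal.ofReal ((ρ n)^d) * V₁) := by
      rw [hac _ (hShell_meas n) (hShell_sub n)]
      calc ∫⁻ x in Shell n, ENNReal.ofReal (νb x)
          ≤ ∫⁻ _ in Shell n, ENNReal.ofReal (m₂ * f (ρ (n+1))) := by
            apply setLIntegral_mono' (hShell_meas n)
            intro y hy
            apply ENNReal.ofReal_le_ofReal
            have hy0 : 0 < ‖y‖ := lt_of_lt_of_le (hρpos (n+1)) hy.1
            have hyr₀ : ‖y‖ < r₀ := lt_of_lt_of_le hy.2 (hρler₀ n)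
            calc νb y ≤ m₂ * f ‖y‖ := hupp y hy0 hyr₀
              _ ≤ m₂ * f (ρ (n+1)) := by
                  apply mul_le_mul_of_nonneg_left _ hm₂.le
                  exact hf_anti (ρ (n+1)) ‖y‖ (hρpos _) hy.1 hyr₀.le
        _ = ENNReal.ofReal (m₂ * f (ρ (n+1))) * volume (Shell n) :=
            setLIntegral_const _ _
        _ ≤ ENNReal.ofReal (m₂ * f (ρ (n+1))) * (ENNReal.ofReal ((ρ n)^d) * V₁) := by
            apply mul_le_mul_right
            have hsub : Shell n ⊆ Metric.ball (0 : EuclideanSpace ℝ (Fin d)) (ρ n) :=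
              fun y hy => mem_ball_zero_iff.2 hy.2
            calc volume (Shell n) ≤ volume (Metric.ball (0 : EuclideanSpace ℝ (Fin d)) (ρ n)) :=
                  measure_mono hsub
              _ = ENNReal.ofReal ((ρ n)^d) * V₁ := by
                  rw [Measure.addHaar_ball volume (0 : EuclideanSpace ℝ (Fin d)) (hρpos n).le,
                    finrank_euclideanSpace_fin]
    calc ∫⁻ y in Shell n, ENNReal.ofReal (min 2 (‖y‖^2 / r^2)) ∂ν
        ≤ ENNReal.ofReal (min 2 ((ρ n)^2 / r^2)) * ν (Shell n) := s1
      _ ≤ ENNReal.ofReal (min 2 ((ρ n)^2 / r^2)) *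
          (ENNReal.ofReal (m₂ * f (ρ (n+1))) * (ENNReal.ofReal ((ρ n)^d) * V₁)) :=
          mul_le_mul_right s2 _
      _ = ENNReal.ofReal (a n) := by
          simp only [ha]
          rw [ENNReal.ofReal_mul (mul_nonneg hminnn (by positivity)),
            ENNReal.ofReal_mul hminnn,
            ENNReal.ofReal_mul (by positivity : (0:ℝ) ≤ (ρ n)^d),
            ENNReal.ofReal_toReal hV₁top.ne]
          ring
  -- sum bound
  have hsum_bound : ∀ N : ℕ, ∑ n ∈ Finset.range N, a n ≤ D * Sγ * (f r * r^d) := by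
    intro N
    set x₀ : ℝ := r₀ / r with hx₀def
    have hx₀1 : 1 ≤ x₀ := (one_le_div hr).2 hrr₀.le
    have hterm2 : ∀ n, a n ≤ (D * (f r * r^d)) *
        min ((x₀/2^n) ^ (-γ₁)) ((x₀/2^n) ^ γ₂) := by
      intro n
      set x : ℝ := x₀ / 2^n with hxdef
      have hxpos : 0 < x := by rw [hxdef, hx₀def]; positivity
      have hxρ : ρ n = x * r := by
        rw [hxdef, hx₀def, hρ]; field_simp
      have hfρle : f (ρ (n+1)) ≤ Cf * f r * ((2/x)^β₂ + (2/x)^β₁) := by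
        have h1 : ρ (n+1) = x * r / 2 := by rw [hρsucc n, hxρ]
        have h2 : r / (ρ (n+1)) = 2 / x := by
          rw [h1]; field_simp
        have := hfcomp (ρ (n+1)) (hρpos _) (hρler₀ _)
        rwa [h2] at this
      have hmb := min_prod_bound (d:ℝ) β₁ β₂ hβ12 (by linarith) x hxpos
      have hγeq1 : (d:ℝ) - β₁ = -γ₁ := by rw [hγ₁def]; ring
      have hγeq2 : (d:ℝ) + 2 - β₂ = γ₂ := by rw [hγ₂def]
      rw [hγeq1, hγeq2] at hmb
      have hxd : (ρ n)^d = x^d * r^d := by rw [hxρ, mul_pow]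
      have hxsq : (ρ n)^2 / r^2 = x^2 := by rw [hxρ]; field_simp
      have hxdr : (x:ℝ)^d = x^(d:ℝ) := (Real.rpow_natCast x d).symm
      have hminnn : (0:ℝ) ≤ min 2 (x^2) := le_min (by norm_num) (by positivity)
      calc a n = min 2 (x^2) * (m₂ * f (ρ (n+1))) * (x^d * r^d * V₁.toReal) := by
            simp only [ha]; rw [hxsq, hxd]
        _ ≤ min 2 (x^2) * (m₂ * (Cf * f r * ((2/x)^β₂ + (2/x)^β₁))) *
              (x^d * r^d * V₁.toReal) := by
            apply mul_le_mul_of_nonneg_right _ (by positivity)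
            apply mul_le_mul_of_nonneg_left _ hminnn
            exact mul_le_mul_of_nonneg_left hfρle hm₂.le
        _ = (m₂ * Cf * f r * r^d * V₁.toReal) *
              (min 2 (x^2) * ((2/x)^β₂ + (2/x)^β₁) * x^(d:ℝ)) := by
            rw [← hxdr]; ring
        _ ≤ (m₂ * Cf * f r * r^d * V₁.toReal) *
              ((2:ℝ)^(β₂+2) * min (x ^ (-γ₁)) (x ^ γ₂)) := by
            apply mul_le_mul_of_nonneg_left hmb (by positivity)
        _ = (D * (f r * r^d)) * min (x ^ (-γ₁)) (x ^ γ₂) := by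
            rw [hD]; ring
    calc ∑ n ∈ Finset.range N, a n
        ≤ ∑ n ∈ Finset.range N, (D * (f r * r^d)) *
            min ((x₀/2^n) ^ (-γ₁)) ((x₀/2^n) ^ γ₂) :=
          Finset.sum_le_sum (fun n _ => hterm2 n)
      _ = (D * (f r * r^d)) * ∑ n ∈ Finset.range N,
            min ((x₀/2^n) ^ (-γ₁)) ((x₀/2^n) ^ γ₂) := by
          rw [Finset.mul_sum]
      _ ≤ (D * (f r * r^d)) * Sγ := by
          apply mul_le_mul_of_nonneg_left _ (by positivity)
          rw [hSγ]
          exact sum_min_geom γ₁ γ₂ hγ₁ hγ₂ x₀ hx₀1 N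
      _ = D * Sγ * (f r * r^d) := by ring
  -- inside
  have hin : ∫⁻ y in B, ENNReal.ofReal (min 2 (‖y‖^2 / r^2)) ∂ν ≤
      ENNReal.ofReal (D * Sγ * (f r * r^d)) := by
    calc ∫⁻ y in B, ENNReal.ofReal (min 2 (‖y‖^2 / r^2)) ∂ν
        ≤ ∫⁻ y in ⋃ n, Shell n, ENNReal.ofReal (min 2 (‖y‖^2 / r^2)) ∂ν :=
          lintegral_mono_set hcov
      _ ≤ ∑' n, ∫⁻ y in Shell n, ENNReal.ofReal (min 2 (‖y‖^2 / r^2)) ∂ν :=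
          lintegral_iUnion_le _ _
      _ ≤ ∑' n, ENNReal.ofReal (a n) := ENNReal.tsum_le_tsum hterm
      _ ≤ ENNReal.ofReal (D * Sγ * (f r * r^d)) :=
          tsum_ofReal_le' a hann _ hsum_bound
  -- combine
  calc ∫⁻ y, ENNReal.ofReal (min 2 (‖y‖^2 / r^2)) ∂ν
      = (∫⁻ y in B, ENNReal.ofReal (min 2 (‖y‖^2 / r^2)) ∂ν) +
        ∫⁻ y in Bᶜ, ENNReal.ofReal (min 2 (‖y‖^2 / r^2)) ∂ν :=
        (lintegral_add_compl _ hB).symm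
    _ ≤ ENNReal.ofReal (D * Sγ * (f r * r^d)) + ENNReal.ofReal (Kc/δ * (f r * r^d)) :=
        add_le_add hin (hout.trans houtR)
    _ = ENNReal.ofReal (D * Sγ * (f r * r^d) + Kc/δ * (f r * r^d)) := by
        rw [← ENNReal.ofReal_add (by positivity) (by positivity)]
    _ ≤ ENNReal.ofReal ((D * Sγ + Kc/δ + 1) * (f r * r^d)) := by
        apply ENNReal.ofReal_le_ofReal
        nlinarith [mul_pos hfr hrd]

end AuxM

/-- Φ(ξ) = ∫ (1 − cos⟨ξ,y⟩) ν(dy). -/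
def levyPhi (ν : Measure (EuclideanSpace ℝ (Fin d))) (ξ : EuclideanSpace ℝ (Fin d)) : ℝ :=
  ∫ y, (1 - Real.cos (inner ℝ ξ y)) ∂ν

/-- Ψ(r) = sup_{|ξ| ≤ r} Φ(ξ). -/
def levyPsi (ν : Measure (EuclideanSpace ℝ (Fin d))) (r : ℝ) : ℝ :=
  sSup (levyPhi ν '' {ξ | ‖ξ‖ ≤ r})

/-- Ψ⁻¹(s) = sup {r > 0 : Ψ(r) = s}. -/
def levyPsiInv (ν : Measure (EuclideanSpace ℝ (Fin d))) (s : ℝ) : ℝ :=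
  sSup {r : ℝ | 0 < r ∧ levyPsi ν r = s}

/-- h(t) = 1 / Ψ⁻¹(1/t). -/
def levyh (ν : Measure (EuclideanSpace ℝ (Fin d))) (t : ℝ) : ℝ :=
  1 / levyPsiInv ν (1 / t)

/-- H(r) = ∫ min(1, r²|y|²) ν(dy). -/
def levyH (ν : Measure (EuclideanSpace ℝ (Fin d))) (r : ℝ) : ℝ :=
  (∫⁻ y, ENNReal.ofReal (min 1 (r ^ 2 * ‖y‖ ^ 2)) ∂ν).toReal

/-- A symmetric Lévy measure on ℝ^d with infinite total mass. -/
structure IsSymLevy (ν : Measure (EuclideanSpace ℝ (Fin d))) : Prop where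
  zero_singleton : ν {0} = 0
  levy_integral : (∫⁻ y, ENNReal.ofReal (min 1 (‖y‖ ^ 2)) ∂ν) < ⊤
  symm : ν.map (fun y => -y) = ν
  infinite : ν Set.univ = ⊤

/-- `P` is the convolution semigroup of probability measures with symbol Φ. -/
def IsLevySemigroup (ν : Measure (EuclideanSpace ℝ (Fin d)))
    (P : ℝ → Measure (EuclideanSpace ℝ (Fin d))) : Prop :=
  (∀ t : ℝ, 0 ≤ t → IsProbabilityMeasure (P t)) ∧
  (∀ t : ℝ, 0 ≤ t → ∀ ξ : EuclideanSpace ℝ (Fin d),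
    (∫ y, Complex.exp (Complex.I * Complex.ofReal (inner ℝ ξ y)) ∂(P t))
      = Complex.exp (Complex.ofReal (-(t * levyPhi ν ξ))))

/-- `p t` is a continuous density of `P t` with respect to Lebesgue measure. -/
def HasDensity (P : ℝ → Measure (EuclideanSpace ℝ (Fin d)))
    (p : ℝ → EuclideanSpace ℝ (Fin d) → ℝ) (t : ℝ) : Prop :=
  Continuous (p t) ∧ P t = volume.withDensity (fun x => ENNReal.ofReal (p t x))

/-- Condition (A1) with parameter `tp`. -/
def CondA1 (ν : Measure (EuclideanSpace ℝ (Fin d))) (tp : ℝ≥0∞) : Prop :=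
  ∃ M₀ : ℝ, 0 < M₀ ∧ ∀ t : ℝ, 0 < t → ENNReal.ofReal t < tp →
    (∫ ξ : EuclideanSpace ℝ (Fin d), Real.exp (-(t * levyPhi ν ξ)) * ‖ξ‖)
      ≤ M₀ * levyh ν t ^ (-(d : ℝ) - 1)

/-- Condition (A2) for a function `f` on `(0, r₀]`. -/
def CondA2 (d : ℕ) (f : ℝ → ℝ) (r₀ : ℝ) : Prop :=
  ∃ M₁ M₂ β₁ β₂ : ℝ, 0 < M₁ ∧ 0 < M₂ ∧ (d : ℝ) < β₁ ∧ β₁ ≤ β₂ ∧ β₂ < (d : ℝ) + 2 ∧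
    ∀ r R : ℝ, 0 < r → r ≤ R → R ≤ r₀ →
      M₁ * (R / r) ^ β₁ ≤ f r / f R ∧ f r / f R ≤ M₂ * (R / r) ^ β₂

/-- I(A) = ∫₀^∞ ∫_{S^{d-1}} 1_A(sθ) s^{-1-α}(1+s)^κ e^{-m s^β} ds μ(dθ). -/
def tempI (d : ℕ) (μ : Measure (EuclideanSpace ℝ (Fin d))) (α κ m β : ℝ)
    (A : Set (EuclideanSpace ℝ (Fin d))) : ℝ≥0∞ :=
  ∫⁻ θ, ∫⁻ s in Set.Ioi (0 : ℝ),
    A.indicator (fun _ => ENNReal.ofReal (s ^ (-1 - α) * (1 + s) ^ κ * Real.exp (-m * s ^ β)))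
      (s • θ) ∂volume ∂μ

lemma phi_eq (ν : Measure (EuclideanSpace ℝ (Fin d))) (ξ : EuclideanSpace ℝ (Fin d)) :
    levyPhi ν ξ = (∫⁻ y, ENNReal.ofReal (1 - Real.cos ((inner ℝ ξ y))) ∂ν).toReal := by
  rw [levyPhi, integral_eq_lintegral_of_nonneg_ae]
  · exact Filter.Eventually.of_forall (fun y => by
      simpa using sub_nonneg.2 (Real.cos_le_one ((inner ℝ ξ y))))
  · exact (Continuous.sub continuous_const
      (Real.continuous_cos.comp ((continuous_const.inner continuous_id')))).aestronglyMeasurable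

set_option maxHeartbeats 1600000 in
theorem statement17 (hd : 1 ≤ d)
    (ν : Measure (EuclideanSpace ℝ (Fin d))) (hν : IsSymLevy ν)
    (r₀ : ℝ) (hr₀ : 0 < r₀)
    (νb : EuclideanSpace ℝ (Fin d) → ℝ)
    (hac : ∀ A : Set (EuclideanSpace ℝ (Fin d)), MeasurableSet A → A ⊆ Metric.ball (0 : EuclideanSpace ℝ (Fin d)) r₀ →
      ν A = ∫⁻ x in A, ENNReal.ofReal (νb x))
    (f : ℝ → ℝ)
    (hf_pos : ∀ s : ℝ, 0 < s → s ≤ r₀ → 0 < f s)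
    (hf_anti : ∀ s u : ℝ, 0 < s → s ≤ u → u ≤ r₀ → f u ≤ f s)
    (hA2 : CondA2 d f r₀)
    (hκ : ∃ κ : ℝ, 0 < κ ∧ ∀ s : ℝ, 0 < s → s ≤ r₀ → κ ≤ f s)
    (m₁ m₂ : ℝ) (hm₁ : 0 < m₁) (hm₂ : 0 < m₂)
    (hcomp : ∀ x : EuclideanSpace ℝ (Fin d), 0 < ‖x‖ → ‖x‖ < r₀ →
      m₁ * f ‖x‖ ≤ νb x ∧ νb x ≤ m₂ * f ‖x‖) :
    ∃ c C : ℝ, 0 < c ∧ c ≤ C ∧ ∀ x : EuclideanSpace ℝ (Fin d), 0 < ‖x‖ → ‖x‖ < r₀ →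
      c * levyPsi ν (1 / ‖x‖) / ‖x‖ ^ d ≤ νb x ∧
      νb x ≤ C * levyPsi ν (1 / ‖x‖) / ‖x‖ ^ d := by
  classical
  obtain ⟨M₁, M₂, β₁, β₂, hM₁, hM₂, hβ₁, hβ12, hβ₂, hA2'⟩ := hA2
  have hL : (∫⁻ y, ENNReal.ofReal (min 1 (‖y‖ ^ 2)) ∂ν) < ⊤ := hν.levy_integral
  set i0 : Fin d := ⟨0, hd⟩ with hi0
  set e : EuclideanSpace ℝ (Fin d) := EuclideanSpace.single i0 (1:ℝ) with he_def
  have he : ‖e‖ = 1 := by rw [he_def, EuclideanSpace.norm_single]; norm_num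
  obtain ⟨cL, hcL, hlow⟩ := psi_lower_aux ν r₀ hr₀ νb hac f hf_pos hf_anti m₁ hm₁
    (fun x h1 h2 => (hcomp x h1 h2).1) e he one_sub_cos_ge
  obtain ⟨CU, hCU, hupp⟩ := psi_upper_aux hd ν hL r₀ hr₀ νb hac f hf_pos hf_anti
    M₁ M₂ β₁ β₂ hM₁ hM₂ hβ₁ hβ12 hβ₂ hA2' m₂ hm₂ (fun x h1 h2 => (hcomp x h1 h2).2)
  -- two-sided Ψ bounds
  have hPsi : ∀ r : ℝ, 0 < r → r < r₀ →
      cL * (f r * r^d) ≤ levyPsi ν (1/r) ∧ levyPsi ν (1/r) ≤ CU * (f r * r^d) := by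
    intro r hr hrr₀
    have hfr : 0 < f r := hf_pos r hr hrr₀.le
    have hrd : (0:ℝ) < r ^ d := by positivity
    have hΦle : ∀ ξ : EuclideanSpace ℝ (Fin d), ‖ξ‖ ≤ 1/r →
        (∫⁻ y, ENNReal.ofReal (1 - Real.cos ((inner ℝ ξ y))) ∂ν) ≤
          ∫⁻ y, ENNReal.ofReal (min 2 (‖y‖^2 / r^2)) ∂ν := by
      intro ξ hξ
      apply lintegral_mono
      intro y
      apply ENNReal.ofReal_le_ofReal
      have h1 : |(inner ℝ ξ y)| ≤ ‖y‖/r := by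
        calc |(inner ℝ ξ y)| ≤ ‖ξ‖ * ‖y‖ := abs_real_inner_le_norm ξ y
          _ ≤ (1/r) * ‖y‖ := mul_le_mul_of_nonneg_right hξ (norm_nonneg y)
          _ = ‖y‖/r := by ring
      have h2 : (inner ℝ ξ y)^2 ≤ ‖y‖^2/r^2 := by
        have h3 : |(inner ℝ ξ y)|^2 ≤ (‖y‖/r)^2 := by
          apply pow_le_pow_left₀ (abs_nonneg _) h1
        rw [sq_abs, div_pow] at h3
        exact h3
      calc 1 - Real.cos ((inner ℝ ξ y)) ≤ min 2 ((inner ℝ ξ y)^2) :=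
            one_sub_cos_le_min _ (one_sub_cos_le_sq _)
        _ ≤ min 2 (‖y‖^2/r^2) := min_le_min le_rfl h2
    have hΦval : ∀ ξ : EuclideanSpace ℝ (Fin d), ‖ξ‖ ≤ 1/r →
        levyPhi ν ξ ≤ CU * (f r * r^d) := by
      intro ξ hξ
      rw [phi_eq]
      have h3 := (hΦle ξ hξ).trans (hupp r hr hrr₀)
      calc (∫⁻ y, ENNReal.ofReal (1 - Real.cos ((inner ℝ ξ y))) ∂ν).toReal
          ≤ (ENNReal.ofReal (CU * (f r * r^d))).toReal :=
            ENNReal.toReal_mono ENNReal.ofReal_ne_top h3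
        _ = CU * (f r * r^d) := ENNReal.toReal_ofReal (by positivity)
    have hub : ∀ v ∈ levyPhi ν '' {ξ : EuclideanSpace ℝ (Fin d) | ‖ξ‖ ≤ 1/r},
        v ≤ CU * (f r * r^d) := by
      rintro v ⟨ξ, hξ, rfl⟩
      exact hΦval ξ hξ
    have hne : (levyPhi ν '' {ξ : EuclideanSpace ℝ (Fin d) | ‖ξ‖ ≤ 1/r}).Nonempty :=
      ⟨levyPhi ν 0, 0, by simp only [mem_setOf_eq, norm_zero]; positivity, rfl⟩
    have hbdd : BddAbove (levyPhi ν '' {ξ : EuclideanSpace ℝ (Fin d) | ‖ξ‖ ≤ 1/r}) :=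
      ⟨CU * (f r * r^d), hub⟩
    constructor
    · -- lower bound
      have hnorm : ‖r⁻¹ • e‖ = 1/r := by
        rw [norm_smul, he, Real.norm_eq_abs, abs_of_pos (by positivity : (0:ℝ) < r⁻¹)]
        rw [mul_one, one_div]
      have hmem : levyPhi ν (r⁻¹ • e) ∈
          levyPhi ν '' {ξ : EuclideanSpace ℝ (Fin d) | ‖ξ‖ ≤ 1/r} :=
        ⟨r⁻¹ • e, le_of_eq hnorm, rfl⟩
      have hsup := le_csSup hbdd hmem
      have hval : cL * (f r * r^d) ≤ levyPhi ν (r⁻¹ • e) := by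
        rw [phi_eq]
        have h4 := hlow r hr hrr₀
        have h5 : (∫⁻ y, ENNReal.ofReal (1 - Real.cos ((inner ℝ (r⁻¹ • e) y))) ∂ν) ≠ ⊤ := by
          apply ne_of_lt
          apply lt_of_le_of_lt ((hΦle _ (le_of_eq hnorm)).trans (hupp r hr hrr₀))
          exact ENNReal.ofReal_lt_top
        calc cL * (f r * r^d)
            = (ENNReal.ofReal (cL * (f r * r^d))).toReal :=
              (ENNReal.toReal_ofReal (by positivity)).symm
          _ ≤ (∫⁻ y, ENNReal.ofReal (1 - Real.cos ((inner ℝ (r⁻¹ • e) y))) ∂ν).toReal :=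
              ENNReal.toReal_mono h5 h4
      exact hval.trans hsup
    · exact csSup_le hne hub
  -- cL ≤ CU and m₁ ≤ m₂
  have hmid : 0 < r₀/2 := by positivity
  have hmidlt : r₀/2 < r₀ := by linarith
  have hfmid : 0 < f (r₀/2) := hf_pos _ hmid hmidlt.le
  have hXpos : (0:ℝ) < f (r₀/2) * (r₀/2)^d := by positivity
  have hcLCU : cL ≤ CU := by
    obtain ⟨h1, h2⟩ := hPsi (r₀/2) hmid hmidlt
    have := h1.trans h2
    exact le_of_mul_le_mul_right (by linarith) hXpos
  have hm12 : m₁ ≤ m₂ := by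
    set x₀ : EuclideanSpace ℝ (Fin d) := EuclideanSpace.single i0 (r₀/2) with hx₀def
    have hx₀norm : ‖x₀‖ = r₀/2 := by
      rw [hx₀def, EuclideanSpace.norm_single, Real.norm_eq_abs, abs_of_pos hmid]
    obtain ⟨hc1, hc2⟩ := hcomp x₀ (by rw [hx₀norm]; exact hmid) (by rw [hx₀norm]; exact hmidlt)
    rw [hx₀norm] at hc1 hc2
    have := hc1.trans hc2
    exact le_of_mul_le_mul_right (by linarith) hfmid
  refine ⟨m₁/CU, m₂/cL, by positivity, ?_, ?_⟩
  · calc m₁/CU ≤ m₂/CU := by gcongr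
      _ ≤ m₂/cL := by
          apply div_le_div_of_nonneg_left hm₂.le hcL hcLCU
  · intro x hx hxr
    obtain ⟨hlo, hhi⟩ := hPsi ‖x‖ hx hxr
    obtain ⟨hc1, hc2⟩ := hcomp x hx hxr
    have hfr : 0 < f ‖x‖ := hf_pos _ hx hxr.le
    have hrd : (0:ℝ) < ‖x‖ ^ d := by positivity
    have hΨnn : 0 ≤ levyPsi ν (1/‖x‖) := le_trans (by positivity) hlo
    constructor
    · rw [div_le_iff₀ hrd]
      calc m₁/CU * levyPsi ν (1/‖x‖) ≤ m₁/CU * (CU * (f ‖x‖ * ‖x‖^d)) :=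
            mul_le_mul_of_nonneg_left hhi (by positivity)
        _ = m₁ * f ‖x‖ * ‖x‖^d := by field_simp
        _ ≤ νb x * ‖x‖^d := mul_le_mul_of_nonneg_right hc1 hrd.le
    · rw [le_div_iff₀ hrd]
      calc νb x * ‖x‖^d ≤ m₂ * f ‖x‖ * ‖x‖^d := mul_le_mul_of_nonneg_right hc2 hrd.le
        _ = m₂/cL * (cL * (f ‖x‖ * ‖x‖^d)) := by field_simp
        _ ≤ m₂/cL * levyPsi ν (1/‖x‖) := mul_le_mul_of_nonneg_left hlo (by positivity)
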